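/- arXiv:1908.07128 — 2 statements merged into one kernel-verified Lean document; each statement's English description precedes it below -/
import Mathlib

section
/- The 6×6 matrix S with rows (1,−1,1,r₁,r₂,r₃), (−1,1,−1,−r₂,−r₃,−r₁), (1,−1,1,r₃,r₁,r₂), (r₁,−r₂,r₃,1,1,1), (r₂,−r₃,r₁,1,1,1), (r₃,−r₁,r₂,1,1,1) is symmetric and satisfies S · Sᵀ = 9 · I₆. -/
/-- `α = e^{iπ/9}`. -/
noncomputable def α : ℂ := Complex.exp (Real.pi * Complex.I / 9)

noncomputable def r₁ : ℂ := -α - α ^ 2 + α ^ 5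
noncomputable def r₂ : ℂ := α + α ^ 2 - α ^ 4
noncomputable def r₃ : ℂ := α ^ 4 - α ^ 5

/-- The 6×6 matrix with rows `(1,−1,1,r₁,r₂,r₃)`, `(−1,1,−1,−r₂,−r₃,−r₁)`,
`(1,−1,1,r₃,r₁,r₂)`, `(r₁,−r₂,r₃,1,1,1)`, `(r₂,−r₃,r₁,1,1,1)`, `(r₃,−r₁,r₂,1,1,1)`. -/
noncomputable def S : Matrix (Fin 6) (Fin 6) ℂ :=
  !![1, -1, 1, r₁, r₂, r₃;
     -1, 1, -1, -r₂, -r₃, -r₁;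
     1, -1, 1, r₃, r₁, r₂;
     r₁, -r₂, r₃, 1, 1, 1;
     r₂, -r₃, r₁, 1, 1, 1;
     r₃, -r₁, r₂, 1, 1, 1]

lemma alpha_pow_nine : α ^ 9 = -1 := by
  rw [α, ← Complex.exp_nat_mul]
  rw [show ((9 : ℕ) : ℂ) * (Real.pi * Complex.I / 9) = Real.pi * Complex.I by push_cast; ring,
    Complex.exp_pi_mul_I]

lemma alpha_cube : α ^ 3 = Complex.exp (Real.pi / 3 * Complex.I) := by
  rw [α, ← Complex.exp_nat_mul]
  ring_nf

lemma alpha_cube_ne : α ^ 3 ≠ -1 := by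
  rw [alpha_cube]
  intro h
  have him := congrArg Complex.im h
  rw [show ((Real.pi : ℂ) / 3 * Complex.I) = ((Real.pi / 3 : ℝ) : ℂ) * Complex.I by
      push_cast; ring] at him
  rw [Complex.exp_ofReal_mul_I_im] at him
  rw [Real.sin_pi_div_three] at him
  simp at him

lemma alpha_six : α ^ 6 = α ^ 3 - 1 := by
  have h9 : (α ^ 3 + 1) * (α ^ 6 - α ^ 3 + 1) = 0 := by
    linear_combination alpha_pow_nine
  rcases mul_eq_zero.mp h9 with h | h
  · exact absurd (show α ^ 3 = -1 by linear_combination h) alpha_cube_ne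
  · linear_combination h

lemma hsum : r₁ + r₂ + r₃ = 0 := by
  unfold r₁ r₂ r₃; ring

lemma hprod : r₁ * r₂ + r₂ * r₃ + r₃ * r₁ = -3 := by
  unfold r₁ r₂ r₃
  linear_combination (-α^4 + α^3 - α^2 + 3) * alpha_six

lemma hsq : r₁ ^ 2 + r₂ ^ 2 + r₃ ^ 2 = 6 := by
  linear_combination (r₁ + r₂ + r₃) * hsum - 2 * hprod

@[simp] lemma cons_val_five {β : Type*} (x : β) (u : Fin 5 → β) :
    Matrix.vecCons x u 5 = Matrix.vecHead (Matrix.vecTail (Matrix.vecTail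
      (Matrix.vecTail (Matrix.vecTail u)))) :=
  rfl

set_option maxHeartbeats 2000000 in
theorem S_symm_orthogonal :
    S.IsSymm ∧ S * S.transpose = (9 : ℂ) • (1 : Matrix (Fin 6) (Fin 6) ℂ) := by
  have hs : S.IsSymm := by
    rw [Matrix.IsSymm]
    ext i j
    fin_cases i <;> fin_cases j <;> rfl
  refine ⟨hs, ?_⟩
  rw [show S.transpose = S from hs]
  ext i j
  fin_cases i <;> fin_cases j <;>
      simp [S, Matrix.mul_apply, Fin.sum_univ_six, Matrix.one_apply, Matrix.cons_val_succ, Matrix.vecHead, Matrix.vecTail, Function.comp] <;>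
      first
        | ring1
        | linear_combination hprod
        | linear_combination -hprod
        | linear_combination hsq
        | linear_combination 2 * hsum
        | linear_combination -2 * hsum
end

section
/- For the 6×6 complex matrices S with rows (1,−1,1,r₁,r₂,r₃), (−1,1,−1,−r₂,−r₃,−r₁), (1,−1,1,r₃,r₁,r₂), (r₁,−r₂,r₃,1,1,1), (r₂,−r₃,r₁,1,1,1), (r₃,−r₁,r₂,1,1,1) and T = diag(1, e^{2πi/3}, e^{4πi/3}, e^{−4πi/9}, e^{8πi/9}, e^{2πi/9}), one has (S·T)³ = p₊ · S², where p₊ = Σ_{k=0}^{5} S_{0k}² · T_{kk}. -/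
/-- `T = diag(1, e^{2πi/3}, e^{4πi/3}, e^{−4πi/9}, e^{8πi/9}, e^{2πi/9})`. -/
noncomputable def T : Matrix (Fin 6) (Fin 6) ℂ :=
  Matrix.diagonal ![1, Complex.exp (2 * Real.pi * Complex.I / 3),
    Complex.exp (4 * Real.pi * Complex.I / 3),
    Complex.exp (-4 * Real.pi * Complex.I / 9),
    Complex.exp (8 * Real.pi * Complex.I / 9),
    Complex.exp (2 * Real.pi * Complex.I / 9)]

/-- `p₊ = Σ_k S_{0k}² T_{kk}`. -/
noncomputable def pPlus : ℂ := ∑ k : Fin 6, (S 0 k) ^ 2 * T k k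

section Aux

variable {γ : Type*}

lemma cv0 (a b c d e f : γ) : ![a,b,c,d,e,f] 0 = a := rfl
lemma cv1 (a b c d e f : γ) : ![a,b,c,d,e,f] 1 = b := rfl
lemma cv2 (a b c d e f : γ) : ![a,b,c,d,e,f] 2 = c := rfl
lemma cv3 (a b c d e f : γ) : ![a,b,c,d,e,f] 3 = d := rfl
lemma cv4 (a b c d e f : γ) : ![a,b,c,d,e,f] 4 = e := rfl
lemma cv5 (a b c d e f : γ) : ![a,b,c,d,e,f] 5 = f := rfl

lemma cw0 (a b c d e f : γ) (h : (0:ℕ) < 6) : ![a,b,c,d,e,f] ⟨0,h⟩ = a := rfl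
lemma cw1 (a b c d e f : γ) (h : (1:ℕ) < 6) : ![a,b,c,d,e,f] ⟨1,h⟩ = b := rfl
lemma cw2 (a b c d e f : γ) (h : (2:ℕ) < 6) : ![a,b,c,d,e,f] ⟨2,h⟩ = c := rfl
lemma cw3 (a b c d e f : γ) (h : (3:ℕ) < 6) : ![a,b,c,d,e,f] ⟨3,h⟩ = d := rfl
lemma cw4 (a b c d e f : γ) (h : (4:ℕ) < 6) : ![a,b,c,d,e,f] ⟨4,h⟩ = e := rfl
lemma cw5 (a b c d e f : γ) (h : (5:ℕ) < 6) : ![a,b,c,d,e,f] ⟨5,h⟩ = f := rfl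

lemma hmin : α ^ 6 - α ^ 3 + 1 = 0 := by
  have h3 : α ^ 3 = 1/2 + (Real.sqrt 3)/2 * Complex.I := by
    rw [α, ← Complex.exp_nat_mul]
    rw [show (3:ℕ) * (↑Real.pi * Complex.I / 9) = (↑(Real.pi/3)) * Complex.I by
      push_cast; ring]
    rw [Complex.exp_mul_I, ← Complex.ofReal_cos, ← Complex.ofReal_sin,
      Real.cos_pi_div_three, Real.sin_pi_div_three]
    push_cast; ring
  have hsq : ((Real.sqrt 3 : ℝ) : ℂ)^2 = 3 := by
    norm_cast
    rw [Real.sq_sqrt] <;> norm_num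
  have h6 : α^6 - α^3 + 1 = (α^3)^2 - α^3 + 1 := by ring
  rw [h6, h3]
  linear_combination (-1/4 : ℂ) * hsq + (((Real.sqrt 3 : ℝ):ℂ)^2/4) * Complex.I_sq

lemma hT : T = !![1,0,0,0,0,0; 0,α^6,0,0,0,0; 0,0,α^12,0,0,0;
    0,0,0,α^14,0,0; 0,0,0,0,α^8,0; 0,0,0,0,0,α^2] := by
  have e6 : Complex.exp (2 * Real.pi * Complex.I / 3) = α ^ 6 := by
    rw [α, ← Complex.exp_nat_mul]; congr 1; push_cast; ring
  have e12 : Complex.exp (4 * Real.pi * Complex.I / 3) = α ^ 12 := by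
    rw [α, ← Complex.exp_nat_mul]; congr 1; push_cast; ring
  have e8 : Complex.exp (8 * Real.pi * Complex.I / 9) = α ^ 8 := by
    rw [α, ← Complex.exp_nat_mul]; congr 1; push_cast; ring
  have e2 : Complex.exp (2 * Real.pi * Complex.I / 9) = α ^ 2 := by
    rw [α, ← Complex.exp_nat_mul]; congr 1; push_cast; ring
  have e14 : Complex.exp (-4 * Real.pi * Complex.I / 9) = α ^ 14 := by
    rw [α, ← Complex.exp_nat_mul,
      show (-4 * ↑Real.pi * Complex.I / 9 : ℂ)
        = (14:ℕ) * (↑Real.pi * Complex.I / 9) - 2 * ↑Real.pi * Complex.I by push_cast; ring,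
      Complex.exp_sub, Complex.exp_two_pi_mul_I, div_one]
  rw [T, e6, e12, e8, e2, e14]
  ext i j
  fin_cases i <;> fin_cases j <;>
    first
    | rfl
    | (simp [Matrix.diagonal_apply, cv0, cv1, cv2, cv3, cv4, cv5, cw0, cw1, cw2, cw3, cw4, cw5, Matrix.vecHead,
        Matrix.vecTail]; try rfl)

lemma hp : pPlus = -3 * α ^ 3 := by
  rw [pPlus, hT, Fin.sum_univ_six]
  simp only [S, Matrix.of_apply, cv0, cv1, cv2, cv3, cv4, cv5, cw0, cw1, cw2, cw3, cw4, cw5, r₁, r₂, r₃]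
  linear_combination (α^18 - α^15 - 2*α^14 - α^12 + 2*α^10 + 4*α^6 + 4*α^3 + 1) * hmin

noncomputable def E : Matrix (Fin 6) (Fin 6) ℂ :=
  !![1,0,0,0,0,0; 0,α^6,0,0,0,0; 0,0,α^12,0,0,0;
    0,0,0,α^14,0,0; 0,0,0,0,α^8,0; 0,0,0,0,0,α^2]

noncomputable def A : Matrix (Fin 6) (Fin 6) ℂ :=
  !![(1), (-1 * α ^ 3 + 1), (-1 * α ^ 3), (1 * α ^ 4 + 1 * α ^ 3 - 1), (1 * α ^ 3 - 1 * α - 1), (-1 * α ^ 4 + 1 * α ^ 3 + 1 * α - 1);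
     (-1), (1 * α ^ 3 - 1), (1 * α ^ 3), (1 * α ^ 4 + 1 * α ^ 3 - 1 * α), (-1 * α ^ 4 + 1 * α ^ 3), (1 * α ^ 3 + 1 * α);
     (1), (-1 * α ^ 3 + 1), (-1 * α ^ 3), (-1 * α + 1), (-1 * α ^ 4 + 1 * α + 1), (1 * α ^ 4 + 1);
     (1 * α ^ 5 - 1 * α ^ 2 - 1 * α), (-1 * α ^ 5 - 1 * α ^ 4 + 1 * α ^ 2), (1 * α ^ 5 - 1 * α ^ 4 - 1 * α ^ 2 + 1 * α), (-1 * α ^ 5), (1 * α ^ 5 - 1 * α ^ 2), (1 * α ^ 2);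
     (-1 * α ^ 4 + 1 * α ^ 2 + 1 * α), (-1 * α ^ 2 + 1 * α), (1 * α ^ 4 + 1 * α ^ 2), (-1 * α ^ 5), (1 * α ^ 5 - 1 * α ^ 2), (1 * α ^ 2);
     (-1 * α ^ 5 + 1 * α ^ 4), (1 * α ^ 5 + 1 * α ^ 4 - 1 * α), (-1 * α ^ 5 - 1 * α), (-1 * α ^ 5), (1 * α ^ 5 - 1 * α ^ 2), (1 * α ^ 2)]

noncomputable def B : Matrix (Fin 6) (Fin 6) ℂ :=
  !![(-3 * α ^ 3), (3 * α ^ 3), (-3 * α ^ 3), (3 * α ^ 4 + 3 * α ^ 2), (-3 * α ^ 5 - 3 * α), (3 * α ^ 5 - 3 * α ^ 4 - 3 * α ^ 2 + 3 * α);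
     (-3 * α ^ 3 + 3), (3 * α ^ 3 - 3), (-3 * α ^ 3 + 3), (-3 * α ^ 5 - 3 * α ^ 4 + 3 * α ^ 2), (-3 * α ^ 2 + 3 * α), (3 * α ^ 5 + 3 * α ^ 4 - 3 * α);
     (3), (-3), (3), (-3 * α ^ 5 + 3 * α ^ 4), (3 * α ^ 5 - 3 * α ^ 2 - 3 * α), (-3 * α ^ 4 + 3 * α ^ 2 + 3 * α);
     (3 * α ^ 5 + 3 * α ^ 3 - 3 * α ^ 2 - 3), (3 * α ^ 5 - 3), (-3 * α ^ 3 + 3 * α ^ 2), (-3 * α ^ 4 + 3 * α), (-3 * α ^ 4 + 3 * α), (-3 * α ^ 4 + 3 * α);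
     (3 * α ^ 3 + 3 * α ^ 2 - 3), (-3 * α ^ 5 + 3 * α ^ 2 - 3), (-3 * α ^ 5 - 3 * α ^ 3), (3 * α ^ 4), (3 * α ^ 4), (3 * α ^ 4);
     (-3 * α ^ 5 + 3 * α ^ 3 - 3), (-3 * α ^ 2 - 3), (3 * α ^ 5 - 3 * α ^ 3 - 3 * α ^ 2), (-3 * α), (-3 * α), (-3 * α)]

set_option maxHeartbeats 1000000 in
lemma hA : S * E = A := by
  ext i j
  fin_cases i <;> fin_cases j <;>
    simp only [Matrix.mul_apply, Fin.sum_univ_six, S, E, A, Matrix.of_apply,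
      cv0, cv1, cv2, cv3, cv4, cv5, cw0, cw1, cw2, cw3, cw4, cw5, r₁, r₂, r₃]
  · ring
  · linear_combination (-1) * hmin
  · linear_combination (1 * α ^ 6 + 1 * α ^ 3) * hmin
  · linear_combination (1 * α ^ 13 - 1 * α ^ 9 - 1 * α ^ 7 - 1 * α ^ 6 - 1 * α ^ 4 + 1) * hmin
  · linear_combination (-1 * α ^ 6 + 1 * α ^ 4 + 1 * α + 1) * hmin
  · linear_combination (-1 * α + 1) * hmin
  · ring
  · linear_combination (1) * hmin
  · linear_combination (-1 * α ^ 6 - 1 * α ^ 3) * hmin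
  · linear_combination (1 * α ^ 12 - 1 * α ^ 10 - 1 * α ^ 7 - 1 * α ^ 6 - 1 * α ^ 3 + 1 * α) * hmin
  · linear_combination (1 * α ^ 7 - 1 * α ^ 6 + 1 * α ^ 4 - 1 * α ^ 3) * hmin
  · linear_combination (-1 * α) * hmin
  · ring
  · linear_combination (-1) * hmin
  · linear_combination (1 * α ^ 6 + 1 * α ^ 3) * hmin
  · linear_combination (-1 * α ^ 13 + 1 * α ^ 12 - 1 * α ^ 10 + 1 * α ^ 9 + 1 * α ^ 4 - 1 * α ^ 3 + 1 * α - 1) * hmin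
  · linear_combination (1 * α ^ 7 - 1 * α ^ 3 - 1 * α - 1) * hmin
  · linear_combination (-1) * hmin
  · ring
  · linear_combination (1 * α ^ 4 - 1 * α ^ 2) * hmin
  · linear_combination (-1 * α ^ 11 + 1 * α ^ 10 - 1 * α ^ 8 + 1 * α ^ 7 + 1 * α ^ 2 - 1 * α) * hmin
  · linear_combination (1 * α ^ 8 + 1 * α ^ 5) * hmin
  · linear_combination (1 * α ^ 2) * hmin
  · ring
  · ring
  · linear_combination (1 * α ^ 5 - 1 * α ^ 4 + 1 * α ^ 2 - 1 * α) * hmin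
  · linear_combination (1 * α ^ 11 - 1 * α ^ 7 - 1 * α ^ 5 - 1 * α ^ 4 - 1 * α ^ 2) * hmin
  · linear_combination (1 * α ^ 8 + 1 * α ^ 5) * hmin
  · linear_combination (1 * α ^ 2) * hmin
  · ring
  · ring
  · linear_combination (-1 * α ^ 5 + 1 * α) * hmin
  · linear_combination (-1 * α ^ 10 + 1 * α ^ 8 + 1 * α ^ 5 + 1 * α ^ 4 + 1 * α) * hmin
  · linear_combination (1 * α ^ 8 + 1 * α ^ 5) * hmin
  · linear_combination (1 * α ^ 2) * hmin
  · ring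

set_option maxHeartbeats 1000000 in
lemma hB : A * A = B := by
  ext i j
  fin_cases i <;> fin_cases j <;>
    simp only [Matrix.mul_apply, Fin.sum_univ_six, A, B, Matrix.of_apply,
      cv0, cv1, cv2, cv3, cv4, cv5, cw0, cw1, cw2, cw3, cw4, cw5]
  · linear_combination (2 * α ^ 3 - 1 * α ^ 2) * hmin
  · linear_combination (-2 * α ^ 3 - 2 * α ^ 2) * hmin
  · linear_combination (2 * α ^ 3 - 1 * α ^ 2) * hmin
  · linear_combination (-3 * α ^ 2 - 1 * α - 1) * hmin
  · linear_combination (3 * α ^ 2 + 2 * α - 1) * hmin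
  · linear_combination (-1 * α - 1) * hmin
  · linear_combination (1 * α ^ 3 + 1 * α ^ 2 - 3) * hmin
  · linear_combination (-1 * α ^ 3 - 1 * α ^ 2 + 3) * hmin
  · linear_combination (1 * α ^ 3 - 2 * α ^ 2 - 3) * hmin
  · linear_combination (-3 * α ^ 2 + 1 * α + 1) * hmin
  · linear_combination (3 * α ^ 2 - 2 * α + 1) * hmin
  · linear_combination (1 * α + 1) * hmin
  · linear_combination (-1 * α ^ 3 + 2 * α ^ 2 - 3) * hmin
  · linear_combination (1 * α ^ 3 + 1 * α ^ 2 + 3) * hmin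
  · linear_combination (-1 * α ^ 3 - 1 * α ^ 2 - 3) * hmin
  · linear_combination (-1 * α - 1) * hmin
  · linear_combination (2 * α - 1) * hmin
  · linear_combination (-1 * α - 1) * hmin
  · linear_combination (-1 * α ^ 4 - 1 * α ^ 3 + 3) * hmin
  · linear_combination (1 * α ^ 4 + 1 * α ^ 3 - 3 * α ^ 2 + 3) * hmin
  · linear_combination (-1 * α ^ 4 + 2 * α ^ 3 - 3 * α ^ 2) * hmin
  · linear_combination (-1 * α ^ 2 - 1 * α) * hmin
  · linear_combination (2 * α ^ 2 - 1 * α) * hmin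
  · linear_combination (-1 * α ^ 2 - 1 * α) * hmin
  · linear_combination (-1 * α ^ 4 - 1 * α ^ 3 + 3) * hmin
  · linear_combination (1 * α ^ 4 + 1 * α ^ 3 + 3) * hmin
  · linear_combination (-1 * α ^ 4 + 2 * α ^ 3) * hmin
  · linear_combination (-1 * α ^ 2 - 1 * α) * hmin
  · linear_combination (-1 * α ^ 2 - 1 * α) * hmin
  · linear_combination (2 * α ^ 2 - 1 * α) * hmin
  · linear_combination (-1 * α ^ 4 - 1 * α ^ 3 + 3) * hmin
  · linear_combination (1 * α ^ 4 + 1 * α ^ 3 + 3 * α ^ 2 + 3) * hmin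
  · linear_combination (-1 * α ^ 4 + 2 * α ^ 3 + 3 * α ^ 2) * hmin
  · linear_combination (2 * α ^ 2 + 2 * α) * hmin
  · linear_combination (-1 * α ^ 2 + 2 * α) * hmin
  · linear_combination (-1 * α ^ 2 + 2 * α) * hmin

end Aux

set_option maxHeartbeats 1000000 in
theorem ST_cubed_eq : (S * T) ^ 3 = pPlus • S ^ 2 := by
  have hTE : T = E := hT
  rw [hTE, hp, pow_succ, sq, sq, hA, hB]
  ext i j
  fin_cases i <;> fin_cases j <;>
    simp only [Matrix.mul_apply, Fin.sum_univ_six, Matrix.smul_apply, smul_eq_mul,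
      S, A, B, Matrix.of_apply, cv0, cv1, cv2, cv3, cv4, cv5, cw0, cw1, cw2, cw3, cw4, cw5, r₁, r₂, r₃]
  · linear_combination (6 * α ^ 7 - 6 * α ^ 6 + 6 * α ^ 5 - 3 * α ^ 4 - 6 * α ^ 3 - 3 * α ^ 2) * hmin
  · linear_combination (3 * α ^ 7 - 3 * α ^ 6 + 3 * α ^ 5 + 3 * α ^ 4 - 12 * α ^ 3 - 6 * α ^ 2) * hmin
  · linear_combination (-3 * α ^ 7 + 3 * α ^ 6 - 3 * α ^ 5 - 3 * α ^ 4 + 12 * α ^ 3 - 3 * α ^ 2) * hmin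
  · ring
  · ring
  · ring
  · linear_combination (3 * α ^ 7 - 3 * α ^ 6 + 3 * α ^ 5 - 6 * α ^ 4 - 12 * α ^ 3 + 3 * α ^ 2 + 9) * hmin
  · linear_combination (6 * α ^ 7 - 6 * α ^ 6 + 6 * α ^ 5 + 6 * α ^ 4 - 6 * α ^ 3 + 6 * α ^ 2 + 9) * hmin
  · linear_combination (3 * α ^ 7 - 3 * α ^ 6 + 3 * α ^ 5 - 6 * α ^ 4 - 12 * α ^ 3 + 3 * α ^ 2) * hmin
  · ring
  · ring
  · ring
  · linear_combination (-3 * α ^ 7 + 3 * α ^ 6 - 3 * α ^ 5 - 3 * α ^ 4 + 12 * α ^ 3 - 3 * α ^ 2 + 9) * hmin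
  · linear_combination (3 * α ^ 7 - 3 * α ^ 6 + 3 * α ^ 5 + 3 * α ^ 4 - 12 * α ^ 3 - 6 * α ^ 2 + 9) * hmin
  · linear_combination (6 * α ^ 7 - 6 * α ^ 6 + 6 * α ^ 5 - 3 * α ^ 4 - 6 * α ^ 3 - 3 * α ^ 2) * hmin
  · ring
  · ring
  · ring
  · ring
  · ring
  · ring
  · linear_combination (6 * α ^ 7 - 6 * α ^ 6 + 6 * α ^ 5 - 3 * α ^ 3 + 6 * α ^ 2 + 3 * α + 3) * hmin
  · linear_combination (-3 * α ^ 7 + 3 * α ^ 6 - 3 * α ^ 5 - 3 * α ^ 3 + 6 * α ^ 2 + 3 * α + 3) * hmin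
  · linear_combination (-3 * α ^ 7 + 3 * α ^ 6 - 3 * α ^ 5 + 6 * α ^ 3 + 6 * α ^ 2 - 6 * α + 3) * hmin
  · ring
  · ring
  · ring
  · linear_combination (-3 * α ^ 7 + 3 * α ^ 6 - 3 * α ^ 5 - 3 * α ^ 3 - 3 * α ^ 2 + 3 * α + 3) * hmin
  · linear_combination (6 * α ^ 7 - 6 * α ^ 6 + 6 * α ^ 5 - 3 * α ^ 3 - 3 * α ^ 2 + 3 * α + 3) * hmin
  · linear_combination (-3 * α ^ 7 + 3 * α ^ 6 - 3 * α ^ 5 + 6 * α ^ 3 - 3 * α ^ 2 - 6 * α + 3) * hmin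
  · ring
  · ring
  · ring
  · linear_combination (-3 * α ^ 7 + 3 * α ^ 6 - 3 * α ^ 5 + 6 * α ^ 3 - 3 * α ^ 2 + 3 * α + 3) * hmin
  · linear_combination (-3 * α ^ 7 + 3 * α ^ 6 - 3 * α ^ 5 + 6 * α ^ 3 - 3 * α ^ 2 + 3 * α + 3) * hmin
  · linear_combination (6 * α ^ 7 - 6 * α ^ 6 + 6 * α ^ 5 - 12 * α ^ 3 - 3 * α ^ 2 - 6 * α + 3) * hmin
end
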